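/- For every field k of characteristic zero and every m ≥ 1, δ_{m+1} ∘ δ_m = 0; hence the spaces k[Σ_m], m ≥ 1, with the maps δ_m form a cochain complex. -/

import Mathlib

namespace MarklOps

open Equiv

/-- The juxtaposition `σ × id₁ ∈ Σ_{m+1}` of `σ ∈ Σ_m` with the identity on one strand. -/
def extLast {m : ℕ} (σ : Equiv.Perm (Fin m)) : Equiv.Perm (Fin (m + 1)) :=
  (finSuccEquivLast.symm).permCongr σ.optionCongr

/-- The cycle `ρ_v ∈ Σ_{m+1}` (0-based) fixing `k < v`, sending `k ↦ k+1` for `v ≤ k < m`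
and `m ↦ v`. -/
def rho {m : ℕ} (v : Fin (m + 1)) : Equiv.Perm (Fin (m + 1)) :=
  Fin.revPerm * (Fin.cycleRange v.rev)⁻¹ * Fin.revPerm

/-- The doubling map `d_i(σ) ∈ Σ_{m+1}` of `σ ∈ Σ_m`, for the (1-based) paper index
`0 ≤ i ≤ m+1`: for `1 ≤ i ≤ m` it doubles the `i`-th input strand of `σ`
(it sends `i ↦ σ(i)`, `i+1 ↦ σ(i)+1`, and for `j < i` resp. `j > i+1` it sends `j` to
`σ(j)` resp. `σ(j−1)` if this value is less than `σ(i)`, and to `σ(j)+1` resp. `σ(j−1)+1`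
otherwise); moreover `d_0(σ) = id_1 × σ` and `d_{m+1}(σ) = σ × id_1`. -/
def dbl {m : ℕ} (σ : Equiv.Perm (Fin m)) (i : ℕ) : Equiv.Perm (Fin (m + 1)) :=
  if h : 1 ≤ i ∧ i ≤ m then
    rho (Fin.succ (σ ⟨i - 1, by omega⟩)) * extLast σ * (rho ⟨i, by omega⟩)⁻¹
  else if i = 0 then
    rho ⟨0, Nat.succ_pos m⟩ * extLast σ * (rho ⟨0, Nat.succ_pos m⟩)⁻¹
  else
    extLast σ

/-- `σ` as a total function `ℕ → ℕ` (0-based), sending everything `≥ m` to `m`. -/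
def F {m : ℕ} (σ : Perm (Fin m)) (n : ℕ) : ℕ :=
  if h : n < m then ((σ ⟨n, h⟩ : Fin m) : ℕ) else m

lemma F_lt {m : ℕ} (σ : Perm (Fin m)) {n : ℕ} (h : n < m) : F σ n < m := by
  rw [F, dif_pos h]; exact (σ ⟨n, h⟩).is_lt

lemma F_of_ge {m : ℕ} (σ : Perm (Fin m)) {n : ℕ} (h : m ≤ n) : F σ n = m := by
  rw [F, dif_neg (by omega)]

lemma F_le {m : ℕ} (σ : Perm (Fin m)) (n : ℕ) : F σ n ≤ m := by
  by_cases h : n < m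
  · exact le_of_lt (F_lt σ h)
  · rw [F_of_ge σ (by omega)]

lemma F_leftInv {m : ℕ} (σ : Perm (Fin m)) {n : ℕ} (h : n < m) : F σ⁻¹ (F σ n) = n := by
  have h1 : F σ n = ((σ ⟨n, h⟩ : Fin m) : ℕ) := dif_pos h
  rw [h1, F, dif_pos (σ ⟨n, h⟩).is_lt]
  simp

lemma F_inj {m : ℕ} (σ : Perm (Fin m)) {a b : ℕ} (ha : a < m) (hb : b < m)
    (h : F σ a = F σ b) : a = b := by
  have := F_leftInv σ ha
  rw [h, F_leftInv σ hb] at this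
  omega

lemma extLast_apply {m : ℕ} (σ : Perm (Fin m)) (x : Fin (m+1)) :
    ((extLast σ x : Fin (m+1)) : ℕ) = F σ (x : ℕ) := by
  rw [extLast, permCongr_apply, F]
  simp only [Equiv.symm_symm]
  induction x using Fin.lastCases with
  | last => simp [Fin.val_last]
  | cast y =>
    simp only [finSuccEquivLast_castSucc, optionCongr_apply, Option.map_some,
      finSuccEquivLast_symm_some, Fin.coe_castSucc, Fin.is_lt, dif_pos]

lemma rho_inv_apply {m : ℕ} (v : Fin (m+1)) (x : Fin (m+1)) :
    (((rho v)⁻¹ x : Fin (m+1)) : ℕ) =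
      if (x:ℕ) < (v:ℕ) then (x:ℕ) else if (x:ℕ) = (v:ℕ) then m else (x:ℕ) - 1 := by
  have hrev : (Fin.revPerm : Perm (Fin (m+1)))⁻¹ = Fin.revPerm := by
    ext y : 1
    simp [Fin.revPerm_apply, Equiv.Perm.inv_def, ← Fin.rev_eq_iff]
  have h1 : (rho v)⁻¹ = Fin.revPerm * (Fin.cycleRange v.rev) * Fin.revPerm := by
    rw [rho, mul_inv_rev, mul_inv_rev, inv_inv, hrev, mul_assoc]
  rw [h1]
  simp only [Equiv.Perm.mul_apply, Fin.revPerm_apply]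
  have hxm : (x : ℕ) ≤ m := Nat.lt_succ_iff.mp x.is_lt
  have hvm : (v : ℕ) ≤ m := Nat.lt_succ_iff.mp v.is_lt
  have hvr : (v.rev : ℕ) = m - (v:ℕ) := by rw [Fin.val_rev]; omega
  have hxr : (x.rev : ℕ) = m - (x:ℕ) := by rw [Fin.val_rev]; omega
  rcases lt_trichotomy (x : ℕ) (v : ℕ) with h | h | h
  · rw [Fin.cycleRange_of_gt (by rw [Fin.lt_def, hvr, hxr]; omega)]
    rw [Fin.val_rev, hxr]
    split_ifs <;> omega
  · rw [Fin.cycleRange_of_eq (by rw [Fin.ext_iff, hvr, hxr]; omega)]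
    simp only [Fin.val_rev, Fin.val_zero]
    split_ifs <;> omega
  · rw [Fin.cycleRange_of_lt (by rw [Fin.lt_def, hvr, hxr]; omega)]
    have h2 : ((x.rev + 1 : Fin (m+1)) : ℕ) = (x.rev : ℕ) + 1 := by
      rw [Fin.val_add_one_of_lt]; rw [Fin.lt_def, Fin.val_last, hxr]; omega
    rw [Fin.val_rev, h2, hxr]
    split_ifs <;> omega

lemma rho_apply {m : ℕ} (v : Fin (m+1)) (x : Fin (m+1)) :
    (((rho v) x : Fin (m+1)) : ℕ) =
      if (x:ℕ) < (v:ℕ) then (x:ℕ) else if (x:ℕ) < m then (x:ℕ)+1 else (v:ℕ) := by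
  have hxm : (x : ℕ) ≤ m := Nat.lt_succ_iff.mp x.is_lt
  have hvm : (v : ℕ) ≤ m := Nat.lt_succ_iff.mp v.is_lt
  set yv : ℕ := if (x:ℕ) < (v:ℕ) then (x:ℕ) else if (x:ℕ) < m then (x:ℕ)+1 else (v:ℕ) with hyv
  have hylt : yv < m + 1 := by rw [hyv]; split_ifs <;> omega
  have key : (rho v)⁻¹ ⟨yv, hylt⟩ = x := by
    apply Fin.ext
    rw [rho_inv_apply]
    simp only [hyv]
    split_ifs <;> omega
  conv_lhs => rw [← key, Equiv.Perm.inv_def, Equiv.apply_symm_apply]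


def E {m : ℕ} (σ : Perm (Fin m)) (j : ℕ) : ℕ :=
  if 1 ≤ j ∧ j ≤ m then F σ (j-1) + 1 else j

def P {m : ℕ} (σ : Perm (Fin m)) (i : ℕ) (j : ℕ) : ℕ :=
  if j ≤ i then (if E σ j ≤ E σ i then E σ j else E σ j + 1)
  else (if E σ (j-1) < E σ i then E σ (j-1) else E σ (j-1) + 1)

lemma E_zero {m : ℕ} (σ : Perm (Fin m)) : E σ 0 = 0 := by rw [E]; simp

lemma E_in {m : ℕ} (σ : Perm (Fin m)) {j : ℕ} (h1 : 1 ≤ j) (h2 : j ≤ m) :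
    E σ j = F σ (j-1) + 1 := if_pos ⟨h1, h2⟩

lemma E_out {m : ℕ} (σ : Perm (Fin m)) {j : ℕ} (h : m < j) : E σ j = j :=
  if_neg (by omega)

lemma E_bound {m : ℕ} (σ : Perm (Fin m)) {j : ℕ} (h1 : 1 ≤ j) (h2 : j ≤ m) :
    1 ≤ E σ j ∧ E σ j ≤ m := by
  rw [E_in σ h1 h2]
  have := F_lt σ (show j - 1 < m by omega)
  omega

lemma E_leftInv {m : ℕ} (σ : Perm (Fin m)) (j : ℕ) : E σ⁻¹ (E σ j) = j := by
  by_cases h : 1 ≤ j ∧ j ≤ m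
  · obtain ⟨h1, h2⟩ := h
    have hb := E_bound σ h1 h2
    have hF := F_lt σ (show j - 1 < m by omega)
    rw [E_in σ h1 h2, E_in σ⁻¹ (by omega) (by omega), Nat.add_sub_cancel,
      F_leftInv σ (show j - 1 < m by omega)]
    omega
  · have hj : E σ j = j := if_neg h
    rw [hj]
    exact if_neg h

lemma E_inj {m : ℕ} (σ : Perm (Fin m)) : Function.Injective (E σ) := by
  intro a b hab
  have := E_leftInv σ a
  rw [hab, E_leftInv σ b] at this
  omega

lemma perm_eq_of_E_eq {m : ℕ} {σ τ : Perm (Fin m)} (h : E σ = E τ) : σ = τ := by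
  ext x
  have h1 : E σ ((x:ℕ)+1) = E τ ((x:ℕ)+1) := by rw [h]
  rw [E_in σ (by omega) (by omega), E_in τ (by omega) (by omega), Nat.add_sub_cancel] at h1
  have h2 : F σ (x:ℕ) = ((σ x : Fin m) : ℕ) := by
    rw [F, dif_pos x.is_lt]
  have h3 : F τ (x:ℕ) = ((τ x : Fin m) : ℕ) := by
    rw [F, dif_pos x.is_lt]
  rw [h2, h3] at h1
  omega

lemma conj_val {m : ℕ} (σ : Perm (Fin m)) (v w : Fin (m+1)) (x : Fin (m+1)) :
    (((rho v * extLast σ * (rho w)⁻¹) x : Fin (m+1)) : ℕ) =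
      (if F σ (if (x:ℕ) < (w:ℕ) then (x:ℕ) else if (x:ℕ) = (w:ℕ) then m else (x:ℕ) - 1) < (v:ℕ)
        then F σ (if (x:ℕ) < (w:ℕ) then (x:ℕ) else if (x:ℕ) = (w:ℕ) then m else (x:ℕ) - 1)
        else if F σ (if (x:ℕ) < (w:ℕ) then (x:ℕ) else if (x:ℕ) = (w:ℕ) then m else (x:ℕ) - 1) < m
          then F σ (if (x:ℕ) < (w:ℕ) then (x:ℕ) else if (x:ℕ) = (w:ℕ) then m else (x:ℕ) - 1) + 1
          else (v:ℕ)) := by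
  simp only [Equiv.Perm.mul_apply]
  rw [rho_apply, extLast_apply, rho_inv_apply]

lemma conj_val' {m : ℕ} (σ : Perm (Fin m)) (vv ww : ℕ) (hv : vv < m+1) (hw : ww < m+1)
    (x : Fin (m+1)) :
    (((rho ⟨vv, hv⟩ * extLast σ * (rho ⟨ww, hw⟩)⁻¹) x : Fin (m+1)) : ℕ) =
      (if F σ (if (x:ℕ) < ww then (x:ℕ) else if (x:ℕ) = ww then m else (x:ℕ) - 1) < vv
        then F σ (if (x:ℕ) < ww then (x:ℕ) else if (x:ℕ) = ww then m else (x:ℕ) - 1)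
        else if F σ (if (x:ℕ) < ww then (x:ℕ) else if (x:ℕ) = ww then m else (x:ℕ) - 1) < m
          then F σ (if (x:ℕ) < ww then (x:ℕ) else if (x:ℕ) = ww then m else (x:ℕ) - 1) + 1
          else vv) := by
  rw [conj_val]

lemma dbl_eq_mid {m : ℕ} (σ : Perm (Fin m)) {i : ℕ} (h1 : 1 ≤ i) (h2 : i ≤ m) :
    dbl σ i = rho ⟨F σ (i-1) + 1, by have := F_lt σ (show i-1 < m by omega); omega⟩ *
      extLast σ * (rho ⟨i, by omega⟩)⁻¹ := by
  rw [dbl, dif_pos ⟨h1, h2⟩]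
  congr 2
  congr 1
  apply Fin.ext
  rw [Fin.val_succ]
  have : F σ (i-1) = ((σ ⟨i-1, by omega⟩ : Fin m) : ℕ) := dif_pos (by omega)
  exact congrArg (· + 1) this.symm

lemma dbl_val {m : ℕ} (σ : Perm (Fin m)) {i : ℕ} (hi : i ≤ m + 1) (x : Fin (m+1)) :
    ((dbl σ i x : Fin (m+1)) : ℕ) + 1 = P σ i ((x:ℕ) + 1) := by
  have hxm : (x:ℕ) ≤ m := Nat.lt_succ_iff.mp x.is_lt
  by_cases hA : 1 ≤ i ∧ i ≤ m
  · obtain ⟨h1, h2⟩ := hA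
    have hFi := F_lt σ (show i-1 < m by omega)
    rw [dbl_eq_mid σ h1 h2, conj_val']
    have hEi : E σ i = F σ (i-1) + 1 := E_in σ h1 h2
    rcases Nat.lt_trichotomy (x:ℕ) i with hx | hx | hx
    · simp only [if_pos hx]
      have hFx := F_lt σ (show (x:ℕ) < m by omega)
      rw [P, if_pos (show (x:ℕ)+1 ≤ i by omega),
        E_in σ (show 1 ≤ (x:ℕ)+1 by omega) (show (x:ℕ)+1 ≤ m by omega),
        Nat.add_sub_cancel, hEi]
      split_ifs <;> omega
    · simp only [if_neg (show ¬ (x:ℕ) < i by omega), if_pos hx]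
      rw [F_of_ge σ (le_refl m), P, if_neg (show ¬ (x:ℕ)+1 ≤ i by omega),
        Nat.add_sub_cancel, hx, hEi]
      split_ifs <;> omega
    · simp only [if_neg (show ¬ (x:ℕ) < i by omega), if_neg (show ¬ (x:ℕ) = i by omega)]
      have hFx := F_lt σ (show (x:ℕ) - 1 < m by omega)
      have hne : F σ ((x:ℕ)-1) ≠ F σ (i-1) := by
        intro hh
        have := F_inj σ (show (x:ℕ)-1 < m by omega) (show i-1 < m by omega) hh
        omega
      rw [P, if_neg (show ¬ (x:ℕ)+1 ≤ i by omega), Nat.add_sub_cancel,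
        E_in σ (show 1 ≤ (x:ℕ) by omega) (show (x:ℕ) ≤ m by omega), hEi]
      split_ifs <;> omega
  · by_cases hi0 : i = 0
    · subst hi0
      rw [dbl, dif_neg hA, if_pos rfl, conj_val']
      rcases Nat.eq_zero_or_pos (x:ℕ) with hx | hx
      · simp only [if_neg (show ¬ (x:ℕ) < 0 by omega), if_pos hx]
        rw [F_of_ge σ (le_refl m), P, if_neg (show ¬ (x:ℕ)+1 ≤ 0 by omega),
          Nat.add_sub_cancel, hx, E_zero]
        split_ifs <;> omega
      · simp only [if_neg (show ¬ (x:ℕ) < 0 by omega), if_neg (show ¬ (x:ℕ) = 0 by omega)]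
        have hFx := F_lt σ (show (x:ℕ) - 1 < m by omega)
        rw [P, if_neg (show ¬ (x:ℕ)+1 ≤ 0 by omega), Nat.add_sub_cancel,
          E_in σ (show 1 ≤ (x:ℕ) by omega) (show (x:ℕ) ≤ m by omega), E_zero]
        split_ifs <;> omega
    · have hi1 : i = m + 1 := by omega
      rw [dbl, dif_neg hA, if_neg hi0, extLast_apply, P,
        if_pos (show (x:ℕ)+1 ≤ i by omega), E_out σ (show m < i by omega)]
      by_cases hxl : (x:ℕ) < m
      · have hFx := F_lt σ hxl
        rw [E_in σ (show 1 ≤ (x:ℕ)+1 by omega) (show (x:ℕ)+1 ≤ m by omega),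
          Nat.add_sub_cancel]
        split_ifs <;> omega
      · have hxe : (x:ℕ) = m := by omega
        rw [hxe, E_out σ (by omega), F_of_ge σ (le_refl m)]
        split_ifs <;> omega

lemma E_le {m : ℕ} (σ : Perm (Fin m)) {i : ℕ} (hi : i ≤ m + 1) : E σ i ≤ m + 1 := by
  by_cases h : 1 ≤ i ∧ i ≤ m
  · have := E_bound σ h.1 h.2; omega
  · rw [E, if_neg h]; omega

lemma E_dbl {m : ℕ} (σ : Perm (Fin m)) {i : ℕ} (hi : i ≤ m + 1) :
    E (dbl σ i) = P σ i := by
  funext j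
  rcases Nat.eq_zero_or_pos j with hj | hj1
  · subst hj
    rw [E_zero, P, if_pos (Nat.zero_le i), E_zero, if_pos (Nat.zero_le _)]
  by_cases hj2 : j ≤ m + 1
  · rw [E_in (dbl σ i) hj1 hj2]
    have hlt : j - 1 < m + 1 := by omega
    have hF : F (dbl σ i) (j-1) = ((dbl σ i ⟨j-1, hlt⟩ : Fin (m+1)) : ℕ) := dif_pos hlt
    rw [hF]
    have := dbl_val σ hi (⟨j-1, hlt⟩ : Fin (m+1))
    simp only [] at this
    rw [this]
    congr 1
    omega
  · rw [E_out (dbl σ i) (by omega), P, if_neg (by omega),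
      E_out σ (show m < j - 1 by omega)]
    have := E_le σ hi
    rw [if_neg (by omega)]
    omega

set_option maxHeartbeats 4000000 in
lemma comm_key {m : ℕ} (σ : Perm (Fin m)) {a b : ℕ} (hab : a ≤ b) (hb : b ≤ m+1) :
    dbl (dbl σ b) a = dbl (dbl σ a) (b+1) := by
  apply perm_eq_of_E_eq
  rw [E_dbl (dbl σ b) (show a ≤ m+1+1 by omega), E_dbl (dbl σ a) (show b+1 ≤ m+1+1 by omega)]
  funext j
  rw [P, P]
  simp only [E_dbl σ (show b ≤ m+1 by omega), E_dbl σ (show a ≤ m+1 by omega), P,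
    Nat.add_sub_cancel]
  have e1 : E σ j = E σ (j-1) ↔ j = j-1 := ⟨fun h => E_inj σ h, fun h => congrArg (E σ) h⟩
  have e2 : E σ j = E σ (j-1-1) ↔ j = j-1-1 := ⟨fun h => E_inj σ h, fun h => congrArg (E σ) h⟩
  have e3 : E σ j = E σ a ↔ j = a := ⟨fun h => E_inj σ h, fun h => congrArg (E σ) h⟩
  have e4 : E σ j = E σ b ↔ j = b := ⟨fun h => E_inj σ h, fun h => congrArg (E σ) h⟩
  have e5 : E σ (j-1) = E σ (j-1-1) ↔ j-1 = j-1-1 := ⟨fun h => E_inj σ h, fun h => congrArg (E σ) h⟩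
  have e6 : E σ (j-1) = E σ a ↔ j-1 = a := ⟨fun h => E_inj σ h, fun h => congrArg (E σ) h⟩
  have e7 : E σ (j-1) = E σ b ↔ j-1 = b := ⟨fun h => E_inj σ h, fun h => congrArg (E σ) h⟩
  have e8 : E σ (j-1-1) = E σ a ↔ j-1-1 = a := ⟨fun h => E_inj σ h, fun h => congrArg (E σ) h⟩
  have e9 : E σ (j-1-1) = E σ b ↔ j-1-1 = b := ⟨fun h => E_inj σ h, fun h => congrArg (E σ) h⟩
  have e10 : E σ a = E σ b ↔ a = b := ⟨fun h => E_inj σ h, fun h => congrArg (E σ) h⟩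
  have z0 : E σ 0 = 0 := E_zero σ
  split_ifs <;> omega

/-- The differential `δ_m : k[Σ_m] → k[Σ_{m+1}]`, `δ_m(σ) = Σ_{i=0}^{m+1} (−1)^i d_i(σ)`. -/
noncomputable def delta (k : Type*) [Field k] (m : ℕ) :
    MonoidAlgebra k (Equiv.Perm (Fin m)) →ₗ[k] MonoidAlgebra k (Equiv.Perm (Fin (m + 1))) :=
  Finsupp.lift (MonoidAlgebra k (Equiv.Perm (Fin (m + 1)))) k (Equiv.Perm (Fin m))
    (fun σ => ∑ i ∈ Finset.range (m + 2),
      ((-1 : k) ^ i) • MonoidAlgebra.of k (Equiv.Perm (Fin (m + 1))) (dbl σ i)) ∘ₗ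
    (MonoidAlgebra.coeffLinearEquiv k).toLinearMap

lemma delta_single (k : Type*) [Field k] (m : ℕ) (σ : Perm (Fin m)) (c : k) :
    delta k m (MonoidAlgebra.single σ c : MonoidAlgebra k (Perm (Fin m))) =
      c • ∑ i ∈ Finset.range (m + 2),
        ((-1 : k) ^ i) • MonoidAlgebra.of k (Equiv.Perm (Fin (m + 1))) (dbl σ i) := by
  rw [delta, LinearMap.comp_apply]
  simp only [LinearEquiv.coe_coe, MonoidAlgebra.coeffLinearEquiv_apply, MonoidAlgebra.coeff_single]
  erw [Finsupp.lift_apply, Finsupp.sum_single_index]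
  simp

/-- For every field `k` of characteristic zero and every `m ≥ 1`, `δ_{m+1} ∘ δ_m = 0`;
hence the spaces `k[Σ_m]`, `m ≥ 1`, with the maps `δ_m` form a cochain complex. -/
theorem delta_comp_delta_eq_zero (k : Type*) [Field k] [CharZero k] (m : ℕ) (hm : 1 ≤ m) :
    (delta k (m + 1)).comp (delta k m) = 0 := by
  apply MonoidAlgebra.lhom_ext'
  intro σ
  apply LinearMap.ext
  intro c
  show delta k (m+1) (delta k m (MonoidAlgebra.single σ c)) = 0
  rw [delta_single, map_smul, map_sum]
  rw [smul_eq_zero]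
  right
  have hterm : ∀ i ∈ Finset.range (m+2),
      delta k (m+1) (((-1 : k) ^ i) • MonoidAlgebra.of k (Equiv.Perm (Fin (m+1))) (dbl σ i)) =
      ∑ j ∈ Finset.range (m + 3), ((-1 : k) ^ (i + j)) •
        MonoidAlgebra.of k (Equiv.Perm (Fin (m + 2))) (dbl (dbl σ i) j) := by
    intro i _
    rw [map_smul, MonoidAlgebra.of_apply, delta_single, one_smul, Finset.smul_sum]
    refine Finset.sum_congr rfl (fun j _ => ?_)
    rw [smul_smul, ← pow_add]
  rw [Finset.sum_congr rfl hterm, ← Finset.sum_product']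
  set s : Finset (ℕ × ℕ) := Finset.range (m+2) ×ˢ Finset.range (m+3) with hs
  set g : ℕ × ℕ → MonoidAlgebra k (Equiv.Perm (Fin (m+2))) := fun p =>
    ((-1 : k) ^ (p.1 + p.2)) •
      MonoidAlgebra.of k (Equiv.Perm (Fin (m + 2))) (dbl (dbl σ p.1) p.2) with hg
  show ∑ p ∈ s, g p = 0
  rw [← Finset.sum_filter_add_sum_filter_not s (fun p => p.2 ≤ p.1) g]
  have key : ∑ p ∈ s.filter (fun p => p.2 ≤ p.1), (-(g p)) =
      ∑ p ∈ s.filter (fun p => ¬ p.2 ≤ p.1), g p := by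
    refine Finset.sum_nbij' (fun p => (p.2, p.1 + 1)) (fun p => (p.2 - 1, p.1)) ?_ ?_ ?_ ?_ ?_
    · rintro ⟨p1, p2⟩ hp
      simp only [Finset.mem_filter, hs, Finset.mem_product, Finset.mem_range] at hp ⊢
      omega
    · rintro ⟨p1, p2⟩ hp
      simp only [Finset.mem_filter, hs, Finset.mem_product, Finset.mem_range] at hp ⊢
      omega
    · rintro ⟨p1, p2⟩ hp
      simp only [Finset.mem_filter, hs, Finset.mem_product, Finset.mem_range] at hp
      simp only [Nat.add_sub_cancel]
    · rintro ⟨p1, p2⟩ hp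
      simp only [Finset.mem_filter, hs, Finset.mem_product, Finset.mem_range] at hp
      show (p1, p2 - 1 + 1) = (p1, p2)
      have h9 : ¬ p2 ≤ p1 := hp.2
      have h8 : p2 - 1 + 1 = p2 := by omega
      rw [h8]
    · rintro ⟨p1, p2⟩ hp
      simp only [Finset.mem_filter, hs, Finset.mem_product, Finset.mem_range] at hp
      simp only [hg]
      rw [comm_key σ hp.2 (by omega)]
      rw [show p2 + (p1 + 1) = (p1 + p2) + 1 by omega, pow_succ, mul_comm, neg_one_mul, neg_smul]
  rw [← key, Finset.sum_neg_distrib]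
  exact add_neg_cancel _

end MarklOps
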